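/- arXiv:2012.06918 — 2 statements merged into one kernel-verified Lean document; each statement's English description precedes it below -/
import Mathlib

section
/- Define the Kullback–Leibler divergence D(p‖q) = Σ_x p_x (log p_x − log q_x) for probability vectors p, q on a finite set with q_x > 0 whenever p_x > 0. Define the classical channel divergence D(N‖M) = max_x D(N(x)‖M(x)) over input symbols x, where N(x), M(x) are the output distributions. Then D satisfies the data processing inequality under pre- and post-composition with classical channels: for any stochastic maps E (post-processing) and F (pre-processing), D(E∘N∘F ‖ E∘M∘F) ≤ D(N‖M). -/
open Finset

/-- Kullback–Leibler divergence of finite probability vectors. -/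
noncomputable def KLdiv {Y : Type} [Fintype Y] (p q : Y → ℝ) : ℝ :=
  ∑ y, p y * (Real.log (p y) - Real.log (q y))

/-- Composition of classical channels (stochastic maps): `(E ∘ N) x z = ∑ y N x y * E y z`. -/
noncomputable def chanComp {X Y Z : Type} [Fintype Y]
    (E : Y → Z → ℝ) (N : X → Y → ℝ) : X → Z → ℝ :=
  fun x z => ∑ y, N x y * E y z

/-- Log-sum inequality. -/
lemma logsum {ι : Type} [Fintype ι] (a b : ι → ℝ)
    (ha : ∀ i, 0 ≤ a i) (hb : ∀ i, 0 ≤ b i) (hab : ∀ i, 0 < a i → 0 < b i) :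
    (∑ i, a i) * (Real.log (∑ i, a i) - Real.log (∑ i, b i))
      ≤ ∑ i, a i * (Real.log (a i) - Real.log (b i)) := by
  set A := ∑ i, a i with hA
  set B := ∑ i, b i with hB
  rcases eq_or_lt_of_le (Finset.sum_nonneg (fun i _ => hb i)) with hB0 | hB0
  · -- B = 0 : all b are 0, hence all a are 0
    have hb0 : ∀ i, b i = 0 := by
      intro i
      have := Finset.sum_eq_zero_iff_of_nonneg (fun i _ => hb i) |>.mp hB0.symm
      exact this i (Finset.mem_univ i)
    have ha0 : ∀ i, a i = 0 := by
      intro i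
      by_contra h
      have : 0 < a i := lt_of_le_of_ne (ha i) (Ne.symm h)
      have := hab i this
      rw [hb0 i] at this; exact lt_irrefl 0 this
    have : A = 0 := by rw [hA]; exact Finset.sum_eq_zero (fun i _ => ha0 i)
    rw [this]
    simp only [zero_mul]
    apply Finset.sum_nonneg
    intro i _
    rw [ha0 i]; ring_nf; simp
  · -- B > 0
    rcases eq_or_lt_of_le (Finset.sum_nonneg (fun i _ => ha i)) with hA0 | hA0
    · -- A = 0 : all a are 0
      have ha0 : ∀ i, a i = 0 := by
        intro i
        have := Finset.sum_eq_zero_iff_of_nonneg (fun i _ => ha i) |>.mp hA0.symm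
        exact this i (Finset.mem_univ i)
      have hA' : A = 0 := by rw [hA, ← hA0]
      rw [hA', zero_mul]
      rw [Finset.sum_eq_zero (fun i _ => by rw [ha0 i]; ring)]
    · -- A > 0, B > 0 : Jensen with f t = t * log t, weights b i / B, points a i / b i
      set f : ℝ → ℝ := fun t => t * Real.log t with hf
      set w : ι → ℝ := fun i => b i / B with hw
      set pt : ι → ℝ := fun i => if b i = 0 then 0 else a i / b i with hpt
      have ha0 : ∀ i, b i = 0 → a i = 0 := by
        intro i hbi
        by_contra h
        have : 0 < a i := lt_of_le_of_ne (ha i) (Ne.symm h)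
        have := hab i this
        rw [hbi] at this; exact lt_irrefl 0 this
      have hkey : f (∑ i, w i • pt i) ≤ ∑ i, w i • f (pt i) := by
        apply Real.convexOn_mul_log.map_sum_le
        · intro i _; exact div_nonneg (hb i) hB0.le
        · rw [← Finset.sum_div, ← hB]; exact div_self (ne_of_gt hB0)
        · intro i _
          simp only [hpt, Set.mem_Ici]
          split
          · exact le_rfl
          · exact div_nonneg (ha i) (hb i)
      have hsum : ∑ i, w i • pt i = A / B := by
        rw [hA, Finset.sum_div]
        apply Finset.sum_congr rfl
        intro i _
        simp only [hw, hpt, smul_eq_mul]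
        by_cases hbi : b i = 0
        · simp [hbi, ha0 i hbi]
        · rw [if_neg hbi]
          field_simp
      have hrhs : ∑ i, w i • f (pt i) = (∑ i, a i * (Real.log (a i) - Real.log (b i))) / B := by
        rw [Finset.sum_div]
        apply Finset.sum_congr rfl
        intro i _
        simp only [hw, hpt, hf, smul_eq_mul]
        by_cases hbi : b i = 0
        · simp [hbi, ha0 i hbi]
        · have hbi' : 0 < b i := lt_of_le_of_ne (hb i) (Ne.symm hbi)
          simp only [if_neg hbi]
          by_cases hai : a i = 0
          · simp [hai]
          · have hai' : 0 < a i := lt_of_le_of_ne (ha i) (Ne.symm hai)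
            rw [Real.log_div (ne_of_gt hai') (ne_of_gt hbi')]
            field_simp
      rw [hsum, hrhs] at hkey
      have : f (A / B) = (A * (Real.log A - Real.log B)) / B := by
        simp only [hf]
        rw [Real.log_div (ne_of_gt hA0) (ne_of_gt hB0)]
        field_simp
        rfl
      rw [this] at hkey
      calc A * (Real.log A - Real.log B)
          = (A * (Real.log A - Real.log B)) / B * B := by exact (div_mul_cancel₀ _ (ne_of_gt hB0)).symm
        _ ≤ (∑ i, a i * (Real.log (a i) - Real.log (b i))) / B * B :=
            mul_le_mul_of_nonneg_right hkey hB0.le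
        _ = ∑ i, a i * (Real.log (a i) - Real.log (b i)) := by exact div_mul_cancel₀ _ (ne_of_gt hB0)

/-- Data processing inequality for KL divergence of finite distributions. -/
lemma KL_dpi {Z W : Type} [Fintype Z] [Fintype W] (p q : Z → ℝ) (K : Z → W → ℝ)
    (hp : ∀ z, 0 ≤ p z) (hq : ∀ z, 0 ≤ q z)
    (hK : ∀ z w, 0 ≤ K z w) (hKs : ∀ z, ∑ w, K z w = 1)
    (habs : ∀ z, 0 < p z → 0 < q z) :
    KLdiv (fun w => ∑ z, p z * K z w) (fun w => ∑ z, q z * K z w) ≤ KLdiv p q := by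
  unfold KLdiv
  have step1 : ∀ w : W,
      (∑ z, p z * K z w) * (Real.log (∑ z, p z * K z w) - Real.log (∑ z, q z * K z w))
        ≤ ∑ z, (p z * K z w) * (Real.log (p z * K z w) - Real.log (q z * K z w)) := by
    intro w
    apply logsum
    · intro z; exact mul_nonneg (hp z) (hK z w)
    · intro z; exact mul_nonneg (hq z) (hK z w)
    · intro z hz
      have hpz : 0 < p z := by
        by_contra h
        push_neg at h
        have : p z = 0 := le_antisymm h (hp z)
        rw [this, zero_mul] at hz; exact lt_irrefl 0 hz
      have hKz : 0 < K z w := by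
        by_contra h
        push_neg at h
        have : K z w = 0 := le_antisymm h (hK z w)
        rw [this, mul_zero] at hz; exact lt_irrefl 0 hz
      exact mul_pos (habs z hpz) hKz
  calc ∑ w, (∑ z, p z * K z w) * (Real.log (∑ z, p z * K z w) - Real.log (∑ z, q z * K z w))
      ≤ ∑ w, ∑ z, (p z * K z w) * (Real.log (p z * K z w) - Real.log (q z * K z w)) :=
        Finset.sum_le_sum (fun w _ => step1 w)
    _ = ∑ z, ∑ w, (p z * K z w) * (Real.log (p z * K z w) - Real.log (q z * K z w)) :=
        Finset.sum_comm
    _ = ∑ z, p z * (Real.log (p z) - Real.log (q z)) := by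
        apply Finset.sum_congr rfl
        intro z _
        have : ∀ w : W, (p z * K z w) * (Real.log (p z * K z w) - Real.log (q z * K z w))
            = p z * (Real.log (p z) - Real.log (q z)) * K z w := by
          intro w
          by_cases hpz : p z = 0
          · simp [hpz]
          by_cases hKz : K z w = 0
          · simp [hKz]
          have hpz' : 0 < p z := lt_of_le_of_ne (hp z) (Ne.symm hpz)
          have hqz' : 0 < q z := habs z hpz'
          have hKz' : 0 < K z w := lt_of_le_of_ne (hK z w) (Ne.symm hKz)
          rw [Real.log_mul (ne_of_gt hpz') (ne_of_gt hKz'),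
              Real.log_mul (ne_of_gt hqz') (ne_of_gt hKz')]
          ring
        rw [Finset.sum_congr rfl (fun w _ => this w), ← Finset.mul_sum, hKs z, mul_one]

/-- Data processing inequality for the classical channel divergence
`D(N‖M) = max_x D(N(x)‖M(x))` under pre- and post-composition with channels. -/
theorem stmt5 {X' X Y Y' : Type} [Fintype X'] [Fintype X] [Fintype Y] [Fintype Y']
    [Nonempty X'] [Nonempty X]
    (N M : X → Y → ℝ) (F : X' → X → ℝ) (E : Y → Y' → ℝ)
    (hN : ∀ x y, 0 ≤ N x y) (hNs : ∀ x, ∑ y, N x y = 1)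
    (hM : ∀ x y, 0 ≤ M x y) (hMs : ∀ x, ∑ y, M x y = 1)
    (hF : ∀ x' x, 0 ≤ F x' x) (hFs : ∀ x', ∑ x, F x' x = 1)
    (hE : ∀ y y', 0 ≤ E y y') (hEs : ∀ y, ∑ y', E y y' = 1)
    (habs : ∀ x y, 0 < N x y → 0 < M x y) :
    (⨆ x', KLdiv (chanComp E (chanComp N F) x') (chanComp E (chanComp M F) x'))
      ≤ ⨆ x, KLdiv (N x) (M x) := by
  set S := ⨆ x, KLdiv (N x) (M x) with hS
  have hbdd : BddAbove (Set.range fun x => KLdiv (N x) (M x)) :=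
    Set.Finite.bddAbove (Set.finite_range _)
  have hle : ∀ x, KLdiv (N x) (M x) ≤ S := fun x => le_ciSup hbdd x
  apply ciSup_le
  intro x'
  -- joint distributions on X × Y
  set p : X × Y → ℝ := fun zy => F x' zy.1 * N zy.1 zy.2 with hp
  set q : X × Y → ℝ := fun zy => F x' zy.1 * M zy.1 zy.2 with hq
  set K : X × Y → Y' → ℝ := fun zy w => E zy.2 w with hK
  have hdpi := KL_dpi p q K
    (fun z => mul_nonneg (hF x' z.1) (hN z.1 z.2))
    (fun z => mul_nonneg (hF x' z.1) (hM z.1 z.2))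
    (fun z w => hE z.2 w)
    (fun z => hEs z.2)
    (by
      intro z hz
      have hFz : 0 < F x' z.1 := by
        by_contra h
        push_neg at h
        have : F x' z.1 = 0 := le_antisymm h (hF x' z.1)
        simp only [hp, this, zero_mul] at hz; exact lt_irrefl 0 hz
      have hNz : 0 < N z.1 z.2 := by
        by_contra h
        push_neg at h
        have : N z.1 z.2 = 0 := le_antisymm h (hN z.1 z.2)
        simp only [hp, this, mul_zero] at hz; exact lt_irrefl 0 hz
      exact mul_pos hFz (habs z.1 z.2 hNz))
  have heqN : (fun w => ∑ z, p z * K z w) = chanComp E (chanComp N F) x' := by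
    funext w
    simp only [hp, hK, chanComp, Fintype.sum_prod_type]
    rw [Finset.sum_comm]
    apply Finset.sum_congr rfl
    intro y _
    rw [Finset.sum_mul]
  have heqM : (fun w => ∑ z, q z * K z w) = chanComp E (chanComp M F) x' := by
    funext w
    simp only [hq, hK, chanComp, Fintype.sum_prod_type]
    rw [Finset.sum_comm]
    apply Finset.sum_congr rfl
    intro y _
    rw [Finset.sum_mul]
  rw [heqN, heqM] at hdpi
  refine hdpi.trans ?_
  -- KLdiv p q = ∑ x, F x' x * KLdiv (N x) (M x)
  have hjoint : KLdiv p q = ∑ x, F x' x * KLdiv (N x) (M x) := by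
    unfold KLdiv
    rw [Fintype.sum_prod_type]
    apply Finset.sum_congr rfl
    intro x _
    rw [Finset.mul_sum]
    apply Finset.sum_congr rfl
    intro y _
    simp only [hp, hq]
    by_cases hFx : F x' x = 0
    · simp [hFx]
    by_cases hNy : N x y = 0
    · simp [hNy]
    have hFx' : 0 < F x' x := lt_of_le_of_ne (hF x' x) (Ne.symm hFx)
    have hNy' : 0 < N x y := lt_of_le_of_ne (hN x y) (Ne.symm hNy)
    have hMy' : 0 < M x y := habs x y hNy'
    rw [Real.log_mul (ne_of_gt hFx') (ne_of_gt hNy'),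
        Real.log_mul (ne_of_gt hFx') (ne_of_gt hMy')]
    ring
  rw [hjoint]
  calc ∑ x, F x' x * KLdiv (N x) (M x)
      ≤ ∑ x, F x' x * S :=
        Finset.sum_le_sum (fun x _ => mul_le_mul_of_nonneg_left (hle x) (hF x' x))
    _ = S := by rw [← Finset.sum_mul, hFs x', one_mul]
end

section
/- Let E be a real-valued monotone on a set C of 'classical' objects, monotone under a class of free transformations. For a 'quantum' object N, define the minimal extension E_min(N) := sup { E(Θ[N]) : Θ free transformation with Θ[N] ∈ C } and the maximal extension E_max(N) := inf { E(C) : C ∈ C, N = Υ[C] for some free Υ }. If every free transformation composed with a free transformation is free, then E_min and E_max agree with E on C, and any monotone E' extending E satisfies E_min(N) ≤ E'(N) ≤ E_max(N) for all N in the domain where these are defined. -/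
/-- Minimal and maximal extensions of a resource monotone `E` from a class `C` of classical
objects to all objects: both agree with `E` on `C`, and any monotone `E'` extending `E`
is sandwiched between them. -/
theorem stmt7 {α : Type} (C : Set α) (Free : Set (α → α))
    (hId : id ∈ Free)
    (hcomp : ∀ Θ ∈ Free, ∀ L ∈ Free, (Θ ∘ L) ∈ Free)
    (E : α → ℝ)
    (hE : ∀ Θ ∈ Free, ∀ c ∈ C, Θ c ∈ C → E (Θ c) ≤ E c)
    (E' : α → ℝ)
    (hE' : ∀ Θ ∈ Free, ∀ N, E' (Θ N) ≤ E' N)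
    (hagree : ∀ c ∈ C, E' c = E c) :
    (∀ c ∈ C,
        sSup {r | ∃ Θ ∈ Free, Θ c ∈ C ∧ r = E (Θ c)} = E c ∧
        sInf {r | ∃ c0 ∈ C, ∃ Υ ∈ Free, c = Υ c0 ∧ r = E c0} = E c) ∧
    ∀ N : α,
      ({r | ∃ Θ ∈ Free, Θ N ∈ C ∧ r = E (Θ N)}.Nonempty →
        sSup {r | ∃ Θ ∈ Free, Θ N ∈ C ∧ r = E (Θ N)} ≤ E' N) ∧
      ({r | ∃ c0 ∈ C, ∃ Υ ∈ Free, N = Υ c0 ∧ r = E c0}.Nonempty →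
        E' N ≤ sInf {r | ∃ c0 ∈ C, ∃ Υ ∈ Free, N = Υ c0 ∧ r = E c0}) := by
  constructor
  · intro c hc
    have hub : E c ∈ upperBounds {r | ∃ Θ ∈ Free, Θ c ∈ C ∧ r = E (Θ c)} := by
      rintro r ⟨Θ, hΘ, hΘc, rfl⟩
      exact hE Θ hΘ c hc hΘc
    have hlb : E c ∈ lowerBounds {r | ∃ c0 ∈ C, ∃ Υ ∈ Free, c = Υ c0 ∧ r = E c0} := by
      rintro r ⟨c0, hc0, Υ, hΥ, heq, rfl⟩
      have := hE Υ hΥ c0 hc0 (heq ▸ hc)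
      simpa [← heq] using this
    constructor
    · exact le_antisymm (csSup_le ⟨E c, id, hId, hc, rfl⟩ hub)
        (le_csSup ⟨E c, hub⟩ ⟨id, hId, hc, rfl⟩)
    · exact le_antisymm (csInf_le ⟨E c, hlb⟩ ⟨c, hc, id, hId, rfl, rfl⟩)
        (le_csInf ⟨E c, c, hc, id, hId, rfl, rfl⟩ hlb)
  · intro N
    constructor
    · intro hne
      apply csSup_le hne
      rintro r ⟨Θ, hΘ, hΘN, rfl⟩
      rw [← hagree _ hΘN]
      exact hE' Θ hΘ N
    · intro hne
      apply le_csInf hne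
      rintro r ⟨c0, hc0, Υ, hΥ, heq, rfl⟩
      rw [← hagree _ hc0, heq]
      exact hE' Υ hΥ c0
end
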